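/- Let n be an even positive integer, m ∈ {0,...,n/2−1}, and let s'_m be the reflection v ↦ (2m+1−v) mod n. Then the quotient graph Γ_n/s'_m is a path on n/2 vertices with a loop attached to each of its two end vertices; in particular it contains a loop, so it admits no proper coloring. -/
import Mathlib


/-- For even `n`, the quotient of the cycle `Γ_n` by the reflection
`s'_m : v ↦ 2m + 1 - v`: the orbits are `{m - i, m + i + 1}` for
`0 ≤ i < n/2`, and two orbits are adjacent iff their indices differ by one or
they are both an end orbit (`i = 0` or `i = n/2 - 1`), which carry loops.  So
the quotient is a path on `n/2` vertices with a loop at each end; in particular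
it has a loop and admits no proper coloring. -/
theorem orbital_stmt5 (n m : ℕ) (hn : 0 < n) (he : Even n) (hm : m < n / 2) :
    (∀ i j : ℕ, i < n / 2 → j < n / 2 →
      ((∃ v w : ZMod n, (w = v + 1 ∨ w = v - 1) ∧
          (v = (m : ZMod n) - (i : ZMod n) ∨ v = (m : ZMod n) + (i : ZMod n) + 1) ∧
          (w = (m : ZMod n) - (j : ZMod n) ∨ w = (m : ZMod n) + (j : ZMod n) + 1)) ↔
        (j = i + 1 ∨ i = j + 1 ∨ (i = j ∧ (i = 0 ∨ i = n / 2 - 1))))) ∧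
    (∀ (l : ℕ), ¬ ∃ f : ℕ → Fin l, ∀ i j : ℕ, i < n / 2 → j < n / 2 →
      (∃ v w : ZMod n, (w = v + 1 ∨ w = v - 1) ∧
          (v = (m : ZMod n) - (i : ZMod n) ∨ v = (m : ZMod n) + (i : ZMod n) + 1) ∧
          (w = (m : ZMod n) - (j : ZMod n) ∨ w = (m : ZMod n) + (j : ZMod n) + 1)) →
        f i ≠ f j) := by
  obtain ⟨k, hk⟩ := he
  have hk1 : 1 ≤ k := by omega
  have hnk : n / 2 = k := by omega
  have hkn : k < n := by omega
  have hinj : ∀ a b : ℕ, a < n → b < n → (a : ZMod n) = (b : ZMod n) → a = b := by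
    intro a b ha hb h
    have := congrArg ZMod.val h
    rwa [ZMod.val_cast_of_lt ha, ZMod.val_cast_of_lt hb] at this
  have hdvd : ∀ x : ℕ, ((x : ZMod n) = 0) → x ≤ n → x = 0 ∨ x = n := by
    intro x hx hxn
    have hd : n ∣ x := (ZMod.natCast_eq_zero_iff x n).mp hx
    rcases Nat.eq_zero_or_pos x with h | h
    · exact Or.inl h
    · exact Or.inr (by have := Nat.le_of_dvd h hd; omega)
  constructor
  · intro i j hi hj
    rw [hnk] at hi hj
    constructor
    · rintro ⟨v, w, (rfl | rfl), (rfl | rfl), (h | h)⟩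
      · -- m - i + 1 = m - j: i = j + 1
        have : ((i : ℕ) : ZMod n) = ((j + 1 : ℕ) : ZMod n) := by push_cast; linear_combination -h
        have := hinj _ _ (by omega) (by omega) this
        omega
      · -- m - i + 1 = m + j + 1 : i + j ≡ 0
        have : ((i + j : ℕ) : ZMod n) = 0 := by push_cast; linear_combination -h
        have := hdvd _ this (by omega)
        omega
      · -- m + i + 2 = m - j : i + j + 2 ≡ 0
        have : ((i + j + 2 : ℕ) : ZMod n) = 0 := by push_cast; linear_combination h
        have := hdvd _ this (by omega)
        omega
      · -- m + i + 2 = m + j + 1 : j = i + 1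
        have : ((j : ℕ) : ZMod n) = ((i + 1 : ℕ) : ZMod n) := by push_cast; linear_combination -h
        have := hinj _ _ (by omega) (by omega) this
        omega
      · -- m - i - 1 = m - j : j = i + 1
        have : ((j : ℕ) : ZMod n) = ((i + 1 : ℕ) : ZMod n) := by push_cast; linear_combination h
        have := hinj _ _ (by omega) (by omega) this
        omega
      · -- m - i - 1 = m + j + 1 : i + j + 2 ≡ 0
        have : ((i + j + 2 : ℕ) : ZMod n) = 0 := by push_cast; linear_combination -h
        have := hdvd _ this (by omega)
        omega
      · -- m + i + 1 - 1 = m - j : i + j ≡ 0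
        have : ((i + j : ℕ) : ZMod n) = 0 := by push_cast; linear_combination h
        have := hdvd _ this (by omega)
        omega
      · -- m + i = m + j + 1 : i = j + 1
        have : ((i : ℕ) : ZMod n) = ((j + 1 : ℕ) : ZMod n) := by push_cast; linear_combination h
        have := hinj _ _ (by omega) (by omega) this
        omega
    · rintro (rfl | rfl | ⟨rfl, (rfl | h0)⟩)
      · exact ⟨(m : ZMod n) + i + 1, (m : ZMod n) + i + 2,
          Or.inl (by ring), Or.inr rfl, Or.inr (by push_cast; ring)⟩
      · exact ⟨(m : ZMod n) - j - 1, (m : ZMod n) - j,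
          Or.inl (by ring), Or.inl (by push_cast; ring), Or.inl rfl⟩
      · exact ⟨(m : ZMod n), (m : ZMod n) + 1,
          Or.inl rfl, Or.inl (by push_cast; ring), Or.inr (by push_cast; ring)⟩
      · have hx : ((2 * i + 2 : ℕ) : ZMod n) = 0 := by
          rw [show 2 * i + 2 = n by omega]; exact ZMod.natCast_self n
        push_cast at hx
        exact ⟨(m : ZMod n) - i, (m : ZMod n) + i + 1,
          Or.inr (by linear_combination hx), Or.inl rfl, Or.inr rfl⟩
  · rintro l ⟨f, hf⟩
    have h0 : 0 < n / 2 := by omega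
    exact hf 0 0 h0 h0 ⟨(m : ZMod n), (m : ZMod n) + 1, Or.inl rfl,
      Or.inl (by push_cast; ring), Or.inr (by push_cast; ring)⟩ rfl
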